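/- Let Φ be a quantum channel on n×n complex matrices and let X be a matrix with Φ(X) = X. Write X = H + iA with H = (X + Xᴴ)/2 and A = (X − Xᴴ)/(2i) Hermitian; then Φ(H) = H and Φ(A) = A. Moreover, if a Hermitian matrix H with Φ(H) = H is written as H = P − N with P and N positive semidefinite and PN = 0, then Φ(P) = P and Φ(N) = N. -/

import Mathlib

open Matrix Kronecker BigOperators
open scoped ComplexOrder

noncomputable def trB {A B : Type*} [Fintype B] (ρ : Matrix (A × B) (A × B) ℂ) :
    Matrix A A ℂ :=
  Matrix.of fun a a' => ∑ b, ρ (a, b) (a', b)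

noncomputable def trA {A B : Type*} [Fintype A] (ρ : Matrix (A × B) (A × B) ℂ) :
    Matrix B B ℂ :=
  Matrix.of fun b b' => ∑ a, ρ (a, b) (a, b')

def IsState {A : Type*} [Fintype A] (ρ : Matrix A A ℂ) : Prop :=
  ρ.PosSemidef ∧ ρ.trace = 1

def IsQChannel {m n : Type*} [Fintype m] [DecidableEq m] [Fintype n]
    (Φ : Matrix m m ℂ → Matrix n n ℂ) : Prop :=
  ∃ (N : ℕ) (K : Fin N → Matrix n m ℂ),
    (∀ X, Φ X = ∑ i, K i * X * (K i)ᴴ) ∧ (∑ i, (K i)ᴴ * K i = 1)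

def IsOrthProjFamily {A : Type*} [Fintype A] [DecidableEq A] {N : ℕ}
    (P : Fin N → Matrix A A ℂ) : Prop :=
  (∀ k, (P k).IsHermitian) ∧ (∀ k, P k * P k = P k) ∧
  (∀ j k, j ≠ k → P j * P k = 0) ∧ (∑ k, P k = 1)

def IsTQQ {A B : Type*} [Fintype A] [DecidableEq A] [Fintype B] [DecidableEq B]
    (ρ : Matrix (A × B) (A × B) ℂ) : Prop :=
  ¬ ∃ (N : ℕ) (P : Fin N → Matrix A A ℂ),
      IsOrthProjFamily P ∧ (∃ j k, j ≠ k ∧ P j ≠ 0 ∧ P k ≠ 0) ∧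
      ∑ k, (P k ⊗ₖ (1 : Matrix B B ℂ)) * ρ * (P k ⊗ₖ (1 : Matrix B B ℂ)) = ρ

noncomputable def vnEntropy {A : Type*} [Fintype A] [DecidableEq A]
    (ρ : Matrix A A ℂ) : ℝ :=
  if h : ρ.IsHermitian then -∑ i, (h.eigenvalues i) * Real.log (h.eigenvalues i) else 0

noncomputable def mutInfo {A B : Type*} [Fintype A] [DecidableEq A] [Fintype B] [DecidableEq B]
    (ρ : Matrix (A × B) (A × B) ℂ) : ℝ :=
  vnEntropy (trB ρ) + vnEntropy (trA ρ) - vnEntropy ρ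


def IsUnitalCP {n : Type*} [Fintype n] [DecidableEq n]
    (Φ : Matrix n n ℂ → Matrix n n ℂ) : Prop :=
  ∃ (N : ℕ) (K : Fin N → Matrix n n ℂ),
    (∀ X, Φ X = ∑ i, K i * X * (K i)ᴴ) ∧ (∑ i, K i * (K i)ᴴ = 1)

section Aux
open scoped MatrixOrder
variable {m : ℕ}

lemma psd_trace_nonneg' (M : Matrix (Fin m) (Fin m) ℂ) (h : M.PosSemidef) :
    0 ≤ M.trace := by
  rw [Matrix.trace]
  refine Finset.sum_nonneg fun i _ => ?_
  have := h.dotProduct_mulVec_nonneg (Pi.single i 1)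
  simpa [Matrix.diag, dotProduct, Matrix.mulVec, Pi.single_apply,
    Finset.sum_ite_eq, Finset.sum_ite_eq', mul_ite, ite_mul] using this

lemma conjT_mul_self_trace_zero {k l : ℕ} (A : Matrix (Fin k) (Fin l) ℂ)
    (h : (Aᴴ * A).trace = 0) : A = 0 := by
  have h2 : ∑ j, ∑ i, (Complex.normSq (A i j) : ℂ) = 0 := by
    simpa [Matrix.trace, Matrix.diag, Matrix.mul_apply, Matrix.conjTranspose_apply,
      Complex.normSq_eq_conj_mul_self] using h
  have h3 : ∑ j, ∑ i, Complex.normSq (A i j) = 0 := by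
    have : ((∑ j, ∑ i, Complex.normSq (A i j) : ℝ) : ℂ) = 0 := by push_cast; exact h2
    exact_mod_cast this
  ext i j
  have h4 := (Finset.sum_eq_zero_iff_of_nonneg (fun j _ => Finset.sum_nonneg fun i _ => Complex.normSq_nonneg _)).mp h3
  have h5 := (Finset.sum_eq_zero_iff_of_nonneg (fun i _ => Complex.normSq_nonneg _)).mp (h4 j (Finset.mem_univ j)) i (Finset.mem_univ i)
  simpa [Complex.normSq_eq_zero] using h5

lemma psd_trace_zero' {M : Matrix (Fin m) (Fin m) ℂ} (hM : M.PosSemidef)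
    (h : M.trace = 0) : M = 0 := by
  obtain ⟨B, rfl⟩ := (
    CStarAlgebra.nonneg_iff_eq_star_mul_self.mp hM.nonneg : ∃ B : Matrix (Fin m) (Fin m) ℂ, M = Bᴴ * B)
  rw [conjT_mul_self_trace_zero B h]; simp

lemma psd_mul_eq_zero' {M Q : Matrix (Fin m) (Fin m) ℂ} (hM : M.PosSemidef)
    (h : Qᴴ * M * Q = 0) : M * Q = 0 := by
  obtain ⟨B, rfl⟩ := (
    CStarAlgebra.nonneg_iff_eq_star_mul_self.mp hM.nonneg : ∃ B : Matrix (Fin m) (Fin m) ℂ, M = Bᴴ * B)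
  have h1 : (B * Q)ᴴ * (B * Q) = 0 := by
    rw [conjTranspose_mul]; simpa [mul_assoc, star_eq_conjTranspose] using h
  have hBQ : B * Q = 0 := conjTranspose_mul_self_eq_zero.mp h1
  rw [mul_assoc, hBQ, mul_zero]

end Aux

/-- If a quantum channel `Φ` fixes `X`, it fixes the Hermitian part
`H = (X + Xᴴ)/2` and the anti-Hermitian part `A = (X − Xᴴ)/(2i)`. Moreover, if a Hermitian
matrix `H` with `Φ H = H` is written as `H = P − N` with `P, N` positive semidefinite and
`P * N = 0`, then `Φ P = P` and `Φ N = N`. -/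
theorem channel_fixes_parts
    {n : ℕ} (Φ : Matrix (Fin n) (Fin n) ℂ → Matrix (Fin n) (Fin n) ℂ)
    (hΦ : IsQChannel Φ)
    (X : Matrix (Fin n) (Fin n) ℂ) (hX : Φ X = X) :
    Φ (((1 : ℂ)/2) • (X + Xᴴ)) = ((1 : ℂ)/2) • (X + Xᴴ) ∧
    Φ ((1/(2 * Complex.I)) • (X - Xᴴ)) = (1/(2 * Complex.I)) • (X - Xᴴ) ∧
    (∀ H P N : Matrix (Fin n) (Fin n) ℂ, H.IsHermitian → Φ H = H →
      P.PosSemidef → N.PosSemidef → P * N = 0 → H = P - N →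
      Φ P = P ∧ Φ N = N) := by
  obtain ⟨M, K, hmap, hsum⟩ := hΦ
  -- linearity facts
  have hadd : ∀ A B, Φ (A + B) = Φ A + Φ B := by
    intro A B
    simp [hmap, mul_add, add_mul, Finset.sum_add_distrib]
  have hsub : ∀ A B, Φ (A - B) = Φ A - Φ B := by
    intro A B
    simp [hmap, mul_sub, sub_mul, Finset.sum_sub_distrib]
  have hsmul : ∀ (c : ℂ) A, Φ (c • A) = c • Φ A := by
    intro c A
    simp [hmap, Matrix.mul_smul, Matrix.smul_mul, Finset.smul_sum]
  have hstar : ∀ A, Φ Aᴴ = (Φ A)ᴴ := by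
    intro A
    simp [hmap, conjTranspose_sum, conjTranspose_mul, Matrix.mul_assoc]
  have hXH : Φ Xᴴ = Xᴴ := by rw [hstar, hX]
  refine ⟨by rw [hsmul, hadd, hX, hXH], by rw [hsmul, hsub, hX, hXH], ?_⟩
  -- main part
  intro H P N hHerm hΦH hP hN hPN hHPN
  -- positivity of Φ
  have hpos : ∀ A : Matrix (Fin n) (Fin n) ℂ, A.PosSemidef → (Φ A).PosSemidef := by
    intro A hA
    rw [hmap]
    apply Finset.sum_induction _ _ (fun a b ha hb => ha.add hb)
    · exact Matrix.PosSemidef.zero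
    · intro i _
      exact hA.mul_mul_conjTranspose_same (K i)
  -- trace preservation
  have htr : ∀ A : Matrix (Fin n) (Fin n) ℂ, (Φ A).trace = A.trace := by
    intro A
    rw [hmap, Matrix.trace_sum]
    have : ∀ i : Fin M, (K i * A * (K i)ᴴ).trace = ((K i)ᴴ * K i * A).trace := by
      intro i
      rw [Matrix.trace_mul_cycle]
    rw [Finset.sum_congr rfl (fun i _ => this i)]
    rw [← Matrix.trace_sum, ← Finset.sum_mul, hsum, Matrix.one_mul]
  -- construct the support projection Q of P
  have hPH := hP.isHermitian
  set U : Matrix (Fin n) (Fin n) ℂ := (hPH.eigenvectorUnitary : Matrix (Fin n) (Fin n) ℂ) with hU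
  set d : Fin n → ℂ := fun i => (hPH.eigenvalues i : ℂ) with hd
  set e : Fin n → ℂ := fun i => if hPH.eigenvalues i = 0 then 0 else 1 with he
  have hUU : Uᴴ * U = 1 := by
    simpa [hU, star_eq_conjTranspose] using (Unitary.mem_iff.mp hPH.eigenvectorUnitary.2).1
  have hUU' : U * Uᴴ = 1 := by
    simpa [hU, star_eq_conjTranspose] using (Unitary.mem_iff.mp hPH.eigenvectorUnitary.2).2
  have hspec : P = U * diagonal d * Uᴴ := by
    exact (by simpa [hU, star_eq_conjTranspose] using hPH.spectral_theorem :
      P = U * diagonal (Complex.ofReal ∘ hPH.eigenvalues) * Uᴴ)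
  have sandwich : ∀ A B : Matrix (Fin n) (Fin n) ℂ,
      (U * A * Uᴴ) * (U * B * Uᴴ) = U * (A * B) * Uᴴ := by
    intro A B
    calc (U * A * Uᴴ) * (U * B * Uᴴ) = U * A * (Uᴴ * U) * (B * Uᴴ) := by
          simp only [Matrix.mul_assoc]
      _ = U * (A * B) * Uᴴ := by rw [hUU, Matrix.mul_one]; simp only [Matrix.mul_assoc]
  set Q : Matrix (Fin n) (Fin n) ℂ := U * diagonal e * Uᴴ with hQ
  have hestar : star e = e := by
    funext i; by_cases h : hPH.eigenvalues i = 0 <;> simp [he, h]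
  have hee : (fun i => e i * e i) = e := by
    funext i; by_cases h : hPH.eigenvalues i = 0 <;> simp [he, h]
  have hed : (fun i => e i * d i) = d := by
    funext i; by_cases h : hPH.eigenvalues i = 0 <;> simp [he, hd, h]
  have hQherm : Q.IsHermitian := by
    rw [Matrix.IsHermitian, hQ]
    simp only [conjTranspose_mul, conjTranspose_conjTranspose, diagonal_conjTranspose, hestar]
    rw [← Matrix.mul_assoc]
  have hQQ : Q * Q = Q := by
    rw [hQ, sandwich, diagonal_mul_diagonal, hee]
  have hQP : Q * P = P := by
    rw [hQ, hspec, sandwich, diagonal_mul_diagonal, hed]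
  have hPQ : P * Q = P := by
    have := congrArg conjTranspose hQP
    simpa [conjTranspose_mul, hPH.eq, hQherm.eq] using this
  have hQN : Q * N = 0 := by
    have h0 : U * (diagonal d * (Uᴴ * N)) = 0 := by
      rw [← Matrix.mul_assoc, ← Matrix.mul_assoc, ← hspec]; exact hPN
    have h1 : diagonal d * (Uᴴ * N) = 0 := by
      calc diagonal d * (Uᴴ * N) = Uᴴ * (U * (diagonal d * (Uᴴ * N))) := by
            rw [← Matrix.mul_assoc Uᴴ U _, hUU, Matrix.one_mul]
        _ = 0 := by rw [h0, Matrix.mul_zero]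
    have h2 : diagonal e * (Uᴴ * N) = 0 := by
      ext i j
      have h1' := congrFun (congrFun h1 i) j
      simp only [Matrix.diagonal_mul, Matrix.zero_apply] at h1' ⊢
      by_cases h : hPH.eigenvalues i = 0
      · simp [he, h]
      · have hd0 : d i ≠ 0 := by simp [hd, h]
        have hz := (mul_eq_zero.mp h1').resolve_left hd0
        simp [he, h, hz]
    rw [hQ, Matrix.mul_assoc, Matrix.mul_assoc, h2, Matrix.mul_zero]
  -- images
  set MP := Φ P with hMP
  set MN := Φ N with hMN
  have hMPpos : MP.PosSemidef := hpos P hP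
  have hMNpos : MN.PosSemidef := hpos N hN
  have hHdecomp : MP - MN = H := by rw [hMP, hMN, ← hsub, ← hHPN, hΦH]
  have hOneQ : (1 - Q) * (1 - Q) = 1 - Q := by
    simp [Matrix.sub_mul, Matrix.mul_sub, hQQ]
  have hOneQherm : (1 - Q).IsHermitian := (isHermitian_one).sub hQherm
  -- trace computations
  have e1 : Q * H * Q = P := by
    rw [hHPN, Matrix.mul_sub, Matrix.sub_mul, hQP, hPQ, hQN, Matrix.zero_mul, sub_zero]
  have trQMP : (Q * MP * Q).trace = (Q * MP).trace := by
    rw [Matrix.trace_mul_comm (Q * MP) Q, ← Matrix.mul_assoc Q Q MP, hQQ]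
  have trQMN : (Q * MN * Q).trace = (Q * MN).trace := by
    rw [Matrix.trace_mul_comm (Q * MN) Q, ← Matrix.mul_assoc Q Q MN, hQQ]
  have trOneQMP : ((1 - Q) * MP * (1 - Q)).trace = MP.trace - (Q * MP).trace := by
    rw [Matrix.trace_mul_comm ((1 - Q) * MP) (1 - Q), ← Matrix.mul_assoc (1 - Q) (1 - Q) MP,
      hOneQ, Matrix.sub_mul, trace_sub, Matrix.one_mul]
  have key : (Q * MN * Q).trace + ((1 - Q) * MP * (1 - Q)).trace = 0 := by
    have h1 : (Q * MP).trace - (Q * MN).trace = P.trace := by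
      have h2 : (Q * H * Q).trace = (Q * MP * Q).trace - (Q * MN * Q).trace := by
        rw [← hHdecomp, Matrix.mul_sub, Matrix.sub_mul, trace_sub]
      rw [trQMP, trQMN] at h2
      rw [← h2, e1]
    rw [trQMN, trOneQMP, htr P]
    rw [← h1]
    ring
  -- both summands are nonneg, hence zero
  have psd1 : (Q * MN * Q).PosSemidef := by
    have := hMNpos.mul_mul_conjTranspose_same Q
    rwa [hQherm.eq] at this
  have psd2 : ((1 - Q) * MP * (1 - Q)).PosSemidef := by
    have := hMPpos.mul_mul_conjTranspose_same (1 - Q)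
    rwa [hOneQherm.eq] at this
  obtain ⟨ha, hb⟩ := (add_eq_zero_iff_of_nonneg (psd_trace_nonneg' _ psd1)
    (psd_trace_nonneg' _ psd2)).mp key
  have hz1 : Q * MN * Q = 0 := psd_trace_zero' psd1 ha
  have hz2 : (1 - Q) * MP * (1 - Q) = 0 := psd_trace_zero' psd2 hb
  have hMNQ : MN * Q = 0 := psd_mul_eq_zero' hMNpos (by rwa [hQherm.eq])
  have hMPQ' : MP * (1 - Q) = 0 := psd_mul_eq_zero' hMPpos (by rwa [hOneQherm.eq])
  have hMPQ : MP * Q = MP := by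
    rw [Matrix.mul_sub, Matrix.mul_one, sub_eq_zero] at hMPQ'
    exact hMPQ'.symm
  have hQMP : Q * MP = MP := by
    have := congrArg conjTranspose hMPQ
    simpa [conjTranspose_mul, hQherm.eq, hMPpos.isHermitian.eq] using this
  have hQMN : Q * MN = 0 := by
    have := congrArg conjTranspose hMNQ
    simpa [conjTranspose_mul, hQherm.eq, hMNpos.isHermitian.eq] using this
  have hPfix : MP = P := by
    have c1 : Q * H * Q = MP := by
      rw [← hHdecomp, Matrix.mul_sub, Matrix.sub_mul, hQMP, hMPQ, hQMN, Matrix.zero_mul,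
        sub_zero]
    rw [← c1, e1]
  have hNfix : MN = N := by
    have h := hHdecomp
    rw [hPfix, hHPN] at h
    exact sub_right_injective h
  exact ⟨hPfix, hNfix⟩
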